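/- Fix k ≥ 1 and let C = (F, Init, P) be a deterministic transition system over input type I and state type S. If P is k-inductive in C, then P'_k is 1-inductive in the witness system C'_k, i.e., (BMC) for every initial state w of C'_k and every input i, P'_k i w holds, and (consecution) for every witness state w and all inputs i0, i1, P'_k i0 w implies P'_k i1 (F'_k i0 w). -/
import Mathlib


/-- A (deterministic) trace: `s (n+1) = F (x n) (s n)` for all `n`. -/
def IsTrace {I S : Type*} (F : I → S → S) (x : ℕ → I) (s : ℕ → S) : Prop :=
  ∀ n, s (n + 1) = F (x n) (s n)

/-- The system `(F, Init, P)` is safe: every initialized trace satisfies the property. -/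
def Safe {I S : Type*} (F : I → S → S) (Init : Set S) (P : I → S → Prop) : Prop :=
  ∀ x s, IsTrace F x s → s 0 ∈ Init → ∀ n, P (x n) (s n)

/-- `P` is `k`-inductive in `(F, Init, P)`: BMC of depth `k-1` and consecution of depth `k`. -/
def KInductive {I S : Type*} (k : ℕ) (F : I → S → S) (Init : Set S) (P : I → S → Prop) :
    Prop :=
  (∀ x s, IsTrace F x s → s 0 ∈ Init → ∀ n < k, P (x n) (s n)) ∧
  (∀ x s, IsTrace F x s → (∀ n < k, P (x n) (s n)) → P (x k) (s k))

/-- The state type of the witness system: `k` copies of the latches,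
`k-1` copies of the inputs, and `k` initialization bits. -/
abbrev WState (k : ℕ) (I S : Type*) : Type _ :=
  (Fin k → S) × (Fin (k - 1) → I) × (Fin k → Bool)

/-- The transition function of the witness system. -/
def WTrans {I S : Type*} (k : ℕ) (F : I → S → S) (i : I) (w : WState k I S) :
    WState k I S :=
  ⟨fun j => if _h : (j : ℕ) = k - 1 then F i (w.1 j) else w.1 ⟨(j : ℕ) + 1, by omega⟩,
   fun j => if _h : (j : ℕ) = k - 2 then i else w.2.1 ⟨(j : ℕ) + 1, by omega⟩,
   fun j => if _h : (j : ℕ) = k - 1 then w.2.2 j else w.2.2 ⟨(j : ℕ) + 1, by omega⟩⟩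

/-- The initial states of the witness system. -/
def WInit (k : ℕ) (hk : 0 < k) (I : Type*) {S : Type*} (Init : Set S) :
    Set (WState k I S) :=
  {w | w.1 ⟨k - 1, by omega⟩ ∈ Init ∧ w.2.2 ⟨k - 1, by omega⟩ = true ∧
       ∀ j : Fin k, (j : ℕ) < k - 1 → w.2.2 j = false}

/-- The extended input sequence `X`: `X j = x j` for `j < k - 1` and `X (k-1) = i`. -/
def WX {I : Type*} (k : ℕ) (i : I) (x : Fin (k - 1) → I) (j : Fin k) : I :=
  if h : (j : ℕ) = k - 1 then i else x ⟨(j : ℕ), by omega⟩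

/-- The property of the witness system: the conjunction of `p0`–`p4`. -/
def WProp {I S : Type*} (k : ℕ) (hk : 0 < k) (F : I → S → S) (Init : Set S)
    (P : I → S → Prop) (i : I) (w : WState k I S) : Prop :=
  (∀ j : Fin k, ∀ hj : (j : ℕ) < k - 1,
      w.2.2 j = true → w.2.2 ⟨(j : ℕ) + 1, by omega⟩ = true) ∧
  (∀ j : Fin k, ∀ hj : (j : ℕ) < k - 1,
      w.2.2 j = true → w.1 ⟨(j : ℕ) + 1, by omega⟩ = F (WX k i w.2.1 j) (w.1 j)) ∧
  (∀ j : Fin k, w.2.2 j = true → P (WX k i w.2.1 j) (w.1 j)) ∧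
  (∀ j : Fin k, 1 ≤ (j : ℕ) →
      w.2.2 ⟨(j : ℕ) - 1, by omega⟩ = false → w.2.2 j = true → w.1 j ∈ Init) ∧
  (w.2.2 ⟨k - 1, by omega⟩ = true)

lemma finmk_eq {k a b : ℕ} (ha : a < k) (hb : b < k) (h : a = b) :
    (⟨a, ha⟩ : Fin k) = ⟨b, hb⟩ := by subst h; rfl

/-- A trace generated from a start state and input sequence. -/
def traceFrom {I S : Type*} (F : I → S → S) (X : ℕ → I) (s0 : S) : ℕ → S
  | 0 => s0
  | t + 1 => F (X t) (traceFrom F X s0 t)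

lemma traceFrom_isTrace {I S : Type*} (F : I → S → S) (X : ℕ → I) (s0 : S) :
    IsTrace F X (traceFrom F X s0) := fun _ => rfl

/-- Key lemma: consecution target `P i1 (F i0 (ℓ (k-1)))`. -/
lemma key {I S : Type*} (k : ℕ) (hk : 0 < k) (F : I → S → S) (Init : Set S)
    (P : I → S → Prop) (hind : KInductive k F Init P) (i0 i1 : I)
    (ℓ : Fin k → S) (xs : Fin (k - 1) → I) (b : Fin k → Bool)
    (h : WProp k hk F Init P i0 (ℓ, xs, b)) :
    P i1 (F i0 (ℓ ⟨k - 1, by omega⟩)) := by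
  obtain ⟨p0, p1, p2, p3, p4⟩ := h
  classical
  have hex : ∃ n, ∃ hn : n < k, b ⟨n, hn⟩ = true := ⟨k - 1, by omega, p4⟩
  set m := Nat.find hex with hm
  obtain ⟨hmk, hbm⟩ := Nat.find_spec hex
  have hmin : ∀ n < m, ∀ hn : n < k, b ⟨n, hn⟩ = false := by
    intro n hn hnk
    have hne := Nat.find_min hex hn
    cases hb : b ⟨n, hnk⟩ with
    | false => rfl
    | true => exact absurd ⟨hnk, hb⟩ hne
  have hmono : ∀ d, ∀ hd : m + d < k, b ⟨m + d, hd⟩ = true := by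
    intro d
    induction d with
    | zero => intro hd; exact hbm
    | succ t ih =>
      intro hd
      exact p0 ⟨m + t, by omega⟩ (show m + t < k - 1 by omega) (ih (by omega))
  set X : ℕ → I := fun t => if h : m + t < k then WX k i0 xs ⟨m + t, h⟩ else i1 with hX
  set s : ℕ → S := traceFrom F X (ℓ ⟨m, hmk⟩) with hsdef
  have htr : IsTrace F X s := traceFrom_isTrace F X _
  have hs : ∀ t, ∀ ht : m + t < k, s t = ℓ ⟨m + t, ht⟩ := by
    intro t
    induction t with
    | zero => intro ht; rfl
    | succ t ih =>
      intro ht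
      have h1 : m + t < k := by omega
      have h2 : (m + t : ℕ) < k - 1 := by omega
      have hp1 := p1 ⟨m + t, h1⟩ h2 (hmono t h1)
      show F (X t) (s t) = _
      rw [ih h1]
      have hXt : X t = WX k i0 xs ⟨m + t, h1⟩ := by
        rw [hX]; exact dif_pos h1
      rw [hXt, ← hp1]
      rfl
  have hP : ∀ n, m + n < k → P (X n) (s n) := by
    intro n hn
    have hXn : X n = WX k i0 xs ⟨m + n, hn⟩ := by
      rw [hX]; exact dif_pos hn
    rw [hXn, hs n hn]
    exact p2 ⟨m + n, hn⟩ (hmono n hn)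
  set d := k - 1 - m with hd
  have hmd : m + d = k - 1 := by omega
  have e1 : X (d + 1) = i1 := by
    rw [hX]; exact dif_neg (by omega)
  have e2 : s (d + 1) = F i0 (ℓ ⟨k - 1, by omega⟩) := by
    have : s (d + 1) = F (X d) (s d) := rfl
    rw [this, hs d (by omega)]
    have hXd : X d = i0 := by
      simp only [hX]
      rw [dif_pos (show m + d < k by omega)]
      exact dif_pos (show m + d = k - 1 from by omega)
    rw [hXd]
    rw [finmk_eq _ _ hmd]
  rcases Nat.eq_zero_or_pos m with hm0 | hm1
  · -- m = 0 : use consecution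
    have hall : ∀ n < k, P (X n) (s n) := fun n hn => hP n (by omega)
    have := hind.2 X s htr hall
    have hdk : d + 1 = k := by omega
    rw [hdk] at e1 e2
    rw [e1, e2] at this
    exact this
  · -- m ≥ 1 : use BMC
    have hinit : s 0 ∈ Init := by
      show ℓ ⟨m, hmk⟩ ∈ Init
      refine p3 ⟨m, hmk⟩ hm1 ?_ hbm
      have := hmin (m - 1) (by omega) (by omega)
      exact this
    have := hind.1 X s htr hinit (d + 1) (by omega)
    rw [e1, e2] at this
    exact this

/-- If `P` is `k`-inductive in `C`, then `P'_k` is `1`-inductive in the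
witness system `C'_k`. -/
theorem kInductive_witness_oneInductive (k : ℕ) (hk : 0 < k) {I S : Type*}
    (F : I → S → S) (Init : Set S) (P : I → S → Prop)
    (hind : KInductive k F Init P) :
    (∀ w ∈ WInit k hk I Init, ∀ i : I, WProp k hk F Init P i w) ∧
    (∀ (w : WState k I S) (i0 i1 : I),
      WProp k hk F Init P i0 w → WProp k hk F Init P i1 (WTrans k F i0 w)) := by
  constructor
  · -- BMC part
    rintro ⟨ℓ, x, b⟩ ⟨hInit, hbk, hbf⟩ i
    refine ⟨?_, ?_, ?_, ?_, hbk⟩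
    · intro j hj hbj
      rw [hbf j hj] at hbj; cases hbj
    · intro j hj hbj
      rw [hbf j hj] at hbj; cases hbj
    · intro j hbj
      have hj : (j : ℕ) = k - 1 := by
        by_contra hc
        rw [hbf j (by omega)] at hbj; cases hbj
      have hj' : j = ⟨k - 1, by omega⟩ := Fin.ext hj
      rw [hj']
      have hWX : WX k i x ⟨k - 1, by omega⟩ = i := dif_pos rfl
      rw [hWX]
      exact hind.1 (fun _ => i) (traceFrom F (fun _ => i) (ℓ ⟨k - 1, by omega⟩))
        (traceFrom_isTrace _ _ _) hInit 0 hk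
    · intro j h1 _ hbt
      have hj : (j : ℕ) = k - 1 := by
        by_contra hc
        rw [hbf j (by omega)] at hbt; cases hbt
      have hj' : j = ⟨k - 1, by omega⟩ := Fin.ext hj
      rw [hj']; exact hInit
  · -- consecution part
    rintro ⟨ℓ, x, b⟩ i0 i1 h
    obtain ⟨p0, p1, p2, p3, p4⟩ := h
    have hkey := key k hk F Init P hind i0 i1 ℓ x b ⟨p0, p1, p2, p3, p4⟩
    -- abbreviations for new components
    have hX' : ∀ j : Fin k, ∀ hj : (j : ℕ) < k - 1,
        WX k i1 (WTrans k F i0 (ℓ, x, b)).2.1 j = WX k i0 x ⟨(j : ℕ) + 1, by omega⟩ := by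
      intro j hj
      simp only [WTrans, WX]
      rw [dif_neg (show ¬ (j : ℕ) = k - 1 by omega)]
      by_cases hc : (j : ℕ) = k - 2
      · rw [dif_pos hc, dif_pos (show (j : ℕ) + 1 = k - 1 by omega)]
      · rw [dif_neg hc, dif_neg (show ¬ (j : ℕ) + 1 = k - 1 by omega)]
    refine ⟨?_, ?_, ?_, ?_, ?_⟩
    · -- p0
      intro j hj hbj
      simp only [WTrans] at hbj ⊢
      rw [dif_neg (show ¬ (j : ℕ) = k - 1 by omega)] at hbj
      by_cases hc : (j : ℕ) + 1 = k - 1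
      · rw [dif_pos hc]; exact hbj
      · rw [dif_neg hc]
        exact p0 ⟨(j : ℕ) + 1, by omega⟩ (show (j : ℕ) + 1 < k - 1 by omega) hbj
    · -- p1
      intro j hj hbj
      rw [hX' j hj]
      simp only [WTrans] at hbj ⊢
      rw [dif_neg (show ¬ (j : ℕ) = k - 1 by omega)] at hbj
      rw [dif_neg (show ¬ (j : ℕ) = k - 1 by omega)]
      by_cases hc : (j : ℕ) + 1 = k - 1
      · rw [dif_pos hc]
        have hx0 : WX k i0 x ⟨(j : ℕ) + 1, by omega⟩ = i0 := dif_pos hc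
        rw [hx0]
      · rw [dif_neg hc]
        exact p1 ⟨(j : ℕ) + 1, by omega⟩ (show (j : ℕ) + 1 < k - 1 by omega) hbj
    · -- p2
      intro j hbj
      by_cases hc : (j : ℕ) = k - 1
      · have hWX : WX k i1 (WTrans k F i0 (ℓ, x, b)).2.1 j = i1 := dif_pos hc
        rw [hWX]
        simp only [WTrans]
        rw [dif_pos hc]
        have hjj : j = ⟨k - 1, by omega⟩ := Fin.ext hc
        rw [hjj]
        exact hkey
      · rw [hX' j (by omega)]
        simp only [WTrans] at hbj ⊢
        rw [dif_neg hc] at hbj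
        rw [dif_neg hc]
        exact p2 ⟨(j : ℕ) + 1, by omega⟩ hbj
    · -- p3
      intro j h1 hbf hbt
      simp only [WTrans] at hbf hbt ⊢
      by_cases hc : (j : ℕ) = k - 1
      · exfalso
        rw [dif_neg (show ¬ (j : ℕ) - 1 = k - 1 by omega)] at hbf
        have hb : b ⟨k - 1, by omega⟩ = true := p4
        rw [finmk_eq _ (show k - 1 < k by omega) (by omega), hb] at hbf
        cases hbf
      · rw [dif_neg hc] at hbt ⊢
        rw [dif_neg (show ¬ (j : ℕ) - 1 = k - 1 by omega)] at hbf
        refine p3 ⟨(j : ℕ) + 1, by omega⟩ (show 1 ≤ (j : ℕ) + 1 by omega) ?_ hbt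
        rw [finmk_eq (show (j : ℕ) + 1 - 1 < k by omega) (show (j : ℕ) - 1 + 1 < k by omega) (by omega)]
        exact hbf
    · -- p4
      simp only [WTrans]
      split
      · exact p4
      · next hne => exact absurd (by trivial) hne
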